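/- Let L > 0, let m ≥ n > 0 be reals with 2m − n > 0, let β > 0 and r ≥ 0, and suppose D := 1 + 60β²L² − 216mβ²L²/n > 0. Define p := (L(1 + 2βL)/2)/D, q := 36pβ²L²(2m − n)/n, and ζ := β/2 − 12pβ², and assume ζ > 0. Suppose the nonnegative real sequences υ_t, δ_t, G_t and the real sequence F_t with F_t ≥ f* for all t satisfy, for every t = 1, …, T: (i) F_{t+1} ≤ F_t + βL²r² + (L(1 + 2βL)/2)·υ_t − (β/2)·G_t; (ii) (1 − 12β²L²)·υ_t ≤ 30β²L²r² + 36β²L²·δ_{t−1} + 12β²·G_t; (iii) δ_t ≤ ((2m − 2n)/(2m − n))·δ_{t−1} + ((6m − 2n)/(2m − n))·υ_t. Then (1/T)∑_{t=1}^T G_t ≤ (F_1 − f* + q·δ_0)/(ζT) + (1 + 30pβ)·βL²r²/ζ. -/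

import Mathlib

/-- Sequence-level form of Theorem 4.1 (convergence rate of FedSMOO):
`F t` plays the role of the expected global function value (bounded below by
`f*`), `υ t` the averaged local-update term, `δ t` the divergence drift, and
`G t` the squared global gradient norm.  With `p`, `q` and `ζ` defined from the
problem constants, the three per-round inequalities yield
`(1/T) ∑_{t=1}^T G t ≤ (F 1 - f* + q·δ 0)/(ζT) + (1 + 30pβ)βL²r²/ζ`. -/
theorem fedsmoo_convergence_rate
    (L m n β r : ℝ) (hL : 0 < L) (hn : 0 < n) (hnm : n ≤ m)
    (hmn : 0 < 2 * m - n) (hβ : 0 < β) (hr : 0 ≤ r)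
    (hD : 0 < 1 + 60 * β ^ 2 * L ^ 2 - 216 * m * β ^ 2 * L ^ 2 / n)
    (p q ζ : ℝ)
    (hp : p = (L * (1 + 2 * β * L) / 2)
      / (1 + 60 * β ^ 2 * L ^ 2 - 216 * m * β ^ 2 * L ^ 2 / n))
    (hq : q = 36 * p * β ^ 2 * L ^ 2 * (2 * m - n) / n)
    (hζdef : ζ = β / 2 - 12 * p * β ^ 2) (hζ : 0 < ζ)
    (T : ℕ) (hT : 0 < T)
    (υ δ G F : ℕ → ℝ) (fstar : ℝ)
    (hυ : ∀ t, 0 ≤ υ t) (hδ : ∀ t, 0 ≤ δ t) (hG : ∀ t, 0 ≤ G t)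
    (hF : ∀ t, fstar ≤ F t)
    (h1 : ∀ t ∈ Finset.Icc 1 T, F (t + 1)
      ≤ F t + β * L ^ 2 * r ^ 2 + (L * (1 + 2 * β * L) / 2) * υ t
        - (β / 2) * G t)
    (h2 : ∀ t ∈ Finset.Icc 1 T, (1 - 12 * β ^ 2 * L ^ 2) * υ t
      ≤ 30 * β ^ 2 * L ^ 2 * r ^ 2 + 36 * β ^ 2 * L ^ 2 * δ (t - 1)
        + 12 * β ^ 2 * G t)
    (h3 : ∀ t ∈ Finset.Icc 1 T, δ t
      ≤ ((2 * m - 2 * n) / (2 * m - n)) * δ (t - 1)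
        + ((6 * m - 2 * n) / (2 * m - n)) * υ t) :
    (1 / (T : ℝ)) * ∑ t ∈ Finset.Icc 1 T, G t
      ≤ (F 1 - fstar + q * δ 0) / (ζ * T)
        + (1 + 30 * p * β) * β * L ^ 2 * r ^ 2 / ζ := by
  have hp0 : 0 < p := by
    rw [hp]
    apply div_pos _ hD
    positivity
  have hq0 : 0 ≤ q := by
    rw [hq]
    have : 0 ≤ 36 * p * β ^ 2 * L ^ 2 * (2 * m - n) := by positivity
    positivity
  set C : ℝ := (1 + 30 * p * β) * β * L ^ 2 * r ^ 2 with hC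
  -- key algebraic identities
  have e1 : q * ((2 * m - 2 * n) / (2 * m - n)) = q - 36 * p * β ^ 2 * L ^ 2 := by
    rw [hq]; field_simp; ring
  have hD' : (1 + 60 * β ^ 2 * L ^ 2 - 216 * m * β ^ 2 * L ^ 2 / n) ≠ 0 := hD.ne'
  have hn' : n ≠ 0 := hn.ne'
  have hmn' : 2 * m - n ≠ 0 := hmn.ne'
  have hY : (1 + 60 * β ^ 2 * L ^ 2) * n - 216 * m * β ^ 2 * L ^ 2 ≠ 0 := by
    have h : (1 + 60 * β ^ 2 * L ^ 2) * n - 216 * m * β ^ 2 * L ^ 2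
        = (1 + 60 * β ^ 2 * L ^ 2 - 216 * m * β ^ 2 * L ^ 2 / n) * n := by
      field_simp
    rw [h]; exact mul_ne_zero hD' hn'
  have hpD : p * (1 + 60 * β ^ 2 * L ^ 2 - 216 * m * β ^ 2 * L ^ 2 / n)
      = L * (1 + 2 * β * L) / 2 := by
    rw [hp]; exact div_mul_cancel₀ _ hD'
  have e2 : L * (1 + 2 * β * L) / 2 + q * ((6 * m - 2 * n) / (2 * m - n))
      = p * (1 - 12 * β ^ 2 * L ^ 2) := by
    have hc : 36 * p * β ^ 2 * L ^ 2 * (2 * m - n) / n * ((6 * m - 2 * n) / (2 * m - n))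
        = 36 * p * β ^ 2 * L ^ 2 * (6 * m - 2 * n) / n := by
      field_simp
    rw [hq, ← hpD, hc]; field_simp; ring
  -- per-step descent of the Lyapunov function
  have hkey : ∀ t ∈ Finset.Icc 1 T,
      F (t + 1) + q * δ t + ζ * G t ≤ F t + q * δ (t - 1) + C := by
    intro t ht
    have H1 := h1 t ht
    have H2 := mul_le_mul_of_nonneg_left (h2 t ht) hp0.le
    have H3 := mul_le_mul_of_nonneg_left (h3 t ht) hq0
    have e1' : q * (((2 * m - 2 * n) / (2 * m - n)) * δ (t - 1))
        = (q - 36 * p * β ^ 2 * L ^ 2) * δ (t - 1) := by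
      rw [← mul_assoc, e1]
    have e2' : (L * (1 + 2 * β * L) / 2) * υ t
          + q * (((6 * m - 2 * n) / (2 * m - n)) * υ t)
        = p * (1 - 12 * β ^ 2 * L ^ 2) * υ t := by
      rw [← mul_assoc, ← add_mul, e2]
    rw [hζdef, hC]
    linarith [H1, H2, H3, e1', e2']
  -- telescoping sum
  have hsum : ∀ k, k ≤ T →
      F (k + 1) + q * δ k + ζ * ∑ t ∈ Finset.Icc 1 k, G t
        ≤ F 1 + q * δ 0 + k * C := by
    intro k
    induction k with
    | zero => intro _; simp
    | succ k ih =>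
      intro hk
      have ihk := ih (Nat.le_of_succ_le hk)
      have hmem : k + 1 ∈ Finset.Icc 1 T := by
        simp only [Finset.mem_Icc]; omega
      have hstep := hkey (k + 1) hmem
      have hred : (k + 1 : ℕ) - 1 = k := rfl
      rw [hred] at hstep
      rw [Finset.sum_Icc_succ_top (by omega : 1 ≤ k + 1)]
      push_cast
      linarith [hstep, ihk]
  have hfin := hsum T le_rfl
  have hFT := hF (T + 1)
  have hδT : 0 ≤ q * δ T := mul_nonneg hq0 (hδ T)
  set S : ℝ := ∑ t ∈ Finset.Icc 1 T, G t with hS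
  have hζS : ζ * S ≤ F 1 - fstar + q * δ 0 + T * C := by linarith
  have hT' : (0 : ℝ) < T := by exact_mod_cast hT
  have hpos : (0 : ℝ) < ζ * T := mul_pos hζ hT'
  rw [← mul_le_mul_iff_right₀ hpos]
  have l1 : ζ * (T : ℝ) * ((1 / (T : ℝ)) * S) = ζ * S := by
    field_simp
  have l2 : ζ * (T : ℝ) * ((F 1 - fstar + q * δ 0) / (ζ * T) + C / ζ)
      = F 1 - fstar + q * δ 0 + T * C := by
    field_simp
  rw [l1, l2]
  exact hζS
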